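/- Let X̄ : [0,1] → ℝ^{N×M} be a differentiable solution of the BR10 ensemble equation dX̄/ds = − (1/(M−1)) · X̄ (I − U) X̄ᵀ Hᵀ R⁻¹ [ (1/2) H X̄ (I + U) − y·1ᵀ ]. Then X(s) := X̄(s)(I − U) satisfies the perturbation equation dX/ds = − (1/(2(M−1))) X Xᵀ Hᵀ R⁻¹ H X, and x̄(s) := M⁻¹ X̄(s) 1 satisfies the mean equation dx̄/ds = − (1/(M−1)) X Xᵀ Hᵀ R⁻¹ (H x̄ − y). -/

import Mathlib

open Matrix

attribute [local instance] Matrix.normedAddCommGroup Matrix.normedSpace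

noncomputable def mulRightCLM {N M : ℕ} (C : Matrix (Fin M) (Fin M) ℝ) :
    Matrix (Fin N) (Fin M) ℝ →L[ℝ] Matrix (Fin N) (Fin M) ℝ :=
  LinearMap.toContinuousLinearMap
    { toFun := fun A => A * C
      map_add' := fun A B => Matrix.add_mul A B C
      map_smul' := fun r A => Matrix.smul_mul r A C }

@[simp] theorem mulRightCLM_apply {N M : ℕ} (C : Matrix (Fin M) (Fin M) ℝ)
    (A : Matrix (Fin N) (Fin M) ℝ) : mulRightCLM C A = A * C := rfl

noncomputable def mvCLM {N M : ℕ} (v : Fin M → ℝ) (c : ℝ) :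
    Matrix (Fin N) (Fin M) ℝ →L[ℝ] (Fin N → ℝ) :=
  LinearMap.toContinuousLinearMap
    { toFun := fun A => c • (A *ᵥ v)
      map_add' := fun A B => by simp only [Matrix.add_mulVec, smul_add]
      map_smul' := fun r A => by
        simp only [Matrix.smul_mulVec, RingHom.id_apply]
        rw [smul_comm] }

@[simp] theorem mvCLM_apply {N M : ℕ} (v : Fin M → ℝ) (c : ℝ)
    (A : Matrix (Fin N) (Fin M) ℝ) : mvCLM v c A = c • (A *ᵥ v) := rfl

theorem hasDeriv_mulRight {N M : ℕ} (C : Matrix (Fin M) (Fin M) ℝ)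
    (f : ℝ → Matrix (Fin N) (Fin M) ℝ) (D : Matrix (Fin N) (Fin M) ℝ) (s : ℝ)
    (hf : HasDerivWithinAt f D (Set.Icc 0 1) s) :
    HasDerivWithinAt (fun t => f t * C) (D * C) (Set.Icc 0 1) s := by
  have hd := (ContinuousLinearMap.hasFDerivAt (mulRightCLM (N := N) C)).comp_hasDerivWithinAt s hf
  exact hd

theorem hasDeriv_mv {N M : ℕ} (v : Fin M → ℝ) (c : ℝ)
    (f : ℝ → Matrix (Fin N) (Fin M) ℝ) (D : Matrix (Fin N) (Fin M) ℝ) (s : ℝ)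
    (hf : HasDerivWithinAt f D (Set.Icc 0 1) s) :
    HasDerivWithinAt (fun t => c • (f t *ᵥ v)) (c • (D *ᵥ v)) (Set.Icc 0 1) s := by
  have hd := (ContinuousLinearMap.hasFDerivAt (mvCLM (N := N) v c)).comp_hasDerivWithinAt s hf
  exact hd

theorem alg1 {N L M : ℕ} (H : Matrix (Fin L) (Fin N) ℝ) (R : Matrix (Fin L) (Fin L) ℝ)
    (y : Fin L → ℝ) (one : Fin M → ℝ) (U P : Matrix (Fin M) (Fin M) ℝ) (c : ℝ)
    (hPP : P * P = P) (hplusP : (1 + U) * P = P)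
    (hyP : vecMulVec y one * P = 0) (hPt : Pᵀ = P)
    (Xb : Matrix (Fin N) (Fin M) ℝ) :
    (-(1 / (c - 1)) • (Xb * P * Xbᵀ * Hᵀ * R⁻¹ *
          ((1 / 2 : ℝ) • (H * Xb * (1 + U)) - vecMulVec y one))) * P
    = -(1 / (2 * (c - 1))) • ((Xb * P) * (Xb * P)ᵀ * Hᵀ * R⁻¹ * H * (Xb * P)) := by
  rw [Matrix.smul_mul, Matrix.mul_assoc _ _ P, Matrix.sub_mul, Matrix.smul_mul,
    Matrix.mul_assoc (H * Xb) (1 + U) P, hplusP, hyP, sub_zero,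
    Matrix.mul_smul, smul_smul, Matrix.transpose_mul, hPt]
  rw [show Xb * P * (P * Xbᵀ) = Xb * P * Xbᵀ by
    rw [← Matrix.mul_assoc (Xb * P) P, Matrix.mul_assoc Xb P P, hPP]]
  rw [Matrix.mul_assoc (Xb * P * Xbᵀ * Hᵀ * R⁻¹) H (Xb * P), ← Matrix.mul_assoc H Xb P]
  congr 1
  rw [show (2*(c-1)) = (c-1)*2 by ring, one_div, one_div, one_div, mul_inv]
  ring

theorem alg2 {N L M : ℕ} (H : Matrix (Fin L) (Fin N) ℝ) (R : Matrix (Fin L) (Fin L) ℝ)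
    (y : Fin L → ℝ) (one : Fin M → ℝ) (U P : Matrix (Fin M) (Fin M) ℝ) (c : ℝ) (hc : c ≠ 0)
    (hPP : P * P = P) (hPt : Pᵀ = P)
    (hUone : U *ᵥ one = one) (hyone : vecMulVec y one *ᵥ one = c • y)
    (Xb : Matrix (Fin N) (Fin M) ℝ) :
    c⁻¹ • ((-(1 / (c - 1)) • (Xb * P * Xbᵀ * Hᵀ * R⁻¹ *
          ((1 / 2 : ℝ) • (H * Xb * (1 + U)) - vecMulVec y one))) *ᵥ one)
    = -(1 / (c - 1)) •
        (((Xb * P) * (Xb * P)ᵀ * Hᵀ * R⁻¹) *ᵥ (H *ᵥ (c⁻¹ • (Xb *ᵥ one)) - y)) := by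
  have hB : ((1 / 2 : ℝ) • (H * Xb * (1 + U)) - vecMulVec y one) *ᵥ one
      = (H * Xb) *ᵥ one - c • y := by
    rw [Matrix.sub_mulVec, Matrix.smul_mulVec, hyone,
      ← Matrix.mulVec_mulVec, Matrix.add_mulVec, Matrix.one_mulVec, hUone,
      Matrix.mulVec_add]
    congr 1
    rw [← two_smul ℝ ((H * Xb) *ᵥ one), smul_smul]
    norm_num
  have hw : (H * Xb) *ᵥ one - c • y = c • (H *ᵥ (c⁻¹ • (Xb *ᵥ one)) - y) := by
    rw [Matrix.mulVec_smul, smul_sub, smul_smul, mul_inv_cancel₀ hc, one_smul,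
      Matrix.mulVec_mulVec]
  rw [Matrix.smul_mulVec, ← Matrix.mulVec_mulVec, hB, hw, Matrix.mulVec_smul,
    smul_smul, smul_smul]
  rw [show c⁻¹ * -(1 / (c - 1)) * c = -(1 / (c - 1)) by
    rw [mul_comm c⁻¹, mul_assoc, inv_mul_cancel₀ hc, mul_one]]
  congr 2
  rw [Matrix.transpose_mul, hPt, ← Matrix.mul_assoc (Xb * P) P, Matrix.mul_assoc Xb P P, hPP]

/-- If the full ensemble `X̄` solves the BR10 equation
`dX̄/ds = −(1/(M−1)) X̄ (I−U) X̄ᵀ Hᵀ R⁻¹ [ (1/2) H X̄ (I+U) − y·1ᵀ ]`, then the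
perturbations `X := X̄(I−U)` solve `dX/ds = −(1/(2(M−1))) X Xᵀ Hᵀ R⁻¹ H X` and the mean
`x̄ := M⁻¹ X̄ 1` solves `dx̄/ds = −(1/(M−1)) X Xᵀ Hᵀ R⁻¹ (H x̄ − y)`. -/
theorem stmt_11 {N L M : ℕ} (hM : 2 ≤ M)
    (H : Matrix (Fin L) (Fin N) ℝ) (R : Matrix (Fin L) (Fin L) ℝ) (hR : R.PosDef)
    (y : Fin L → ℝ)
    (one : Fin M → ℝ) (hone : one = fun _ => 1)
    (U : Matrix (Fin M) (Fin M) ℝ) (hU : U = (M : ℝ)⁻¹ • vecMulVec one one)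
    (Xbar : ℝ → Matrix (Fin N) (Fin M) ℝ)
    (hXbar : ∀ s ∈ Set.Icc (0:ℝ) 1,
      HasDerivWithinAt Xbar
        (-(1 / ((M : ℝ) - 1)) • (Xbar s * (1 - U) * (Xbar s)ᵀ * Hᵀ * R⁻¹ *
          ((1 / 2 : ℝ) • (H * Xbar s * (1 + U)) - vecMulVec y one)))
        (Set.Icc 0 1) s)
    (X : ℝ → Matrix (Fin N) (Fin M) ℝ) (hX : ∀ s : ℝ, X s = Xbar s * (1 - U))
    (xbar : ℝ → Fin N → ℝ) (hxbar : ∀ s : ℝ, xbar s = (M : ℝ)⁻¹ • (Xbar s *ᵥ one)) :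
    (∀ s ∈ Set.Icc (0:ℝ) 1,
      HasDerivWithinAt X
        (-(1 / (2 * ((M : ℝ) - 1))) • (X s * (X s)ᵀ * Hᵀ * R⁻¹ * H * X s))
        (Set.Icc 0 1) s) ∧
    (∀ s ∈ Set.Icc (0:ℝ) 1,
      HasDerivWithinAt xbar
        (-(1 / ((M : ℝ) - 1)) • ((X s * (X s)ᵀ * Hᵀ * R⁻¹) *ᵥ (H *ᵥ xbar s - y)))
        (Set.Icc 0 1) s) := by
  have hMne : (M:ℝ) ≠ 0 := by
    have : (0:ℝ) < M := by exact_mod_cast lt_of_lt_of_le (by norm_num) hM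
    exact ne_of_gt this
  have hUU : U * U = U := by
    ext i j
    simp [hU, hone, Matrix.mul_apply, vecMulVec_apply, Finset.sum_const]
    field_simp
  have hUone : U *ᵥ one = one := by
    ext i
    simp [hU, hone, Matrix.mulVec, dotProduct, vecMulVec_apply, Finset.sum_const]
    field_simp
  have hUt : Uᵀ = U := by
    ext i j; simp [hU, hone, vecMulVec_apply]
  have hyU : vecMulVec y one * U = vecMulVec y one := by
    ext i j
    simp [hU, hone, Matrix.mul_apply, vecMulVec_apply, Finset.sum_const, Finset.mul_sum]
    field_simp
  have hyone : vecMulVec y one *ᵥ one = (M:ℝ) • y := by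
    ext i
    simp [hone, Matrix.mulVec, dotProduct, vecMulVec_apply, Finset.sum_const, mul_comm]
  set P : Matrix (Fin M) (Fin M) ℝ := 1 - U with hP
  have hPP : P * P = P := by
    simp only [hP, Matrix.mul_sub, Matrix.sub_mul, Matrix.mul_one, Matrix.one_mul, hUU]
    abel
  have hplusP : (1 + U) * P = P := by
    simp only [hP, Matrix.mul_sub, Matrix.add_mul, Matrix.mul_one, Matrix.one_mul, hUU]
    abel
  have hyP : vecMulVec y one * P = 0 := by
    simp only [hP, Matrix.mul_sub, Matrix.mul_one, hyU, sub_self]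
  have hPt : Pᵀ = P := by
    simp [hP, transpose_sub, hUt]
  constructor
  · intro s hs
    have hXeq : X = fun t => Xbar t * P := funext fun t => hX t
    have hd := hasDeriv_mulRight P Xbar _ s (hXbar s hs)
    rw [hXeq]
    beta_reduce
    rw [
      show -(1 / (2 * ((M : ℝ) - 1))) • (Xbar s * P * (Xbar s * P)ᵀ * Hᵀ * R⁻¹ * H * (Xbar s * P))
        = (-(1 / ((M : ℝ) - 1)) • (Xbar s * P * (Xbar s)ᵀ * Hᵀ * R⁻¹ *
            ((1 / 2 : ℝ) • (H * Xbar s * (1 + U)) - vecMulVec y one))) * P from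
        (alg1 H R y one U P (M:ℝ) hPP hplusP hyP hPt (Xbar s)).symm]
    exact hd
  · intro s hs
    have hxeq : xbar = fun t => (M:ℝ)⁻¹ • (Xbar t *ᵥ one) := funext fun t => hxbar t
    have hd := hasDeriv_mv one ((M:ℝ)⁻¹) Xbar _ s (hXbar s hs)
    rw [hX s, hxeq]
    beta_reduce
    rw [
      show -(1 / ((M : ℝ) - 1)) •
          ((Xbar s * P * (Xbar s * P)ᵀ * Hᵀ * R⁻¹) *ᵥ (H *ᵥ ((M:ℝ)⁻¹ • (Xbar s *ᵥ one)) - y))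
        = (M:ℝ)⁻¹ • ((-(1 / ((M : ℝ) - 1)) • (Xbar s * P * (Xbar s)ᵀ * Hᵀ * R⁻¹ *
            ((1 / 2 : ℝ) • (H * Xbar s * (1 + U)) - vecMulVec y one))) *ᵥ one) from
        (alg2 H R y one U P (M:ℝ) hMne hPP hPt hUone hyone (Xbar s)).symm]
    exact hd
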